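/- Let d ≥ 1, δ > 0, let μ be a finite nonnegative Borel measure on [0,δ], let x⁰ : [−δ,1] → ℝ^d be continuous, let Θ be a compact metric space and let f : ℝ^d × ℝ^d × Θ → ℝ be continuous. Let (Ω, 𝓕, P) be a probability space and, for each n ≥ 1, let Z^n : Ω → C([−δ,1]; ℝ^d) be measurable such that sup_{s∈[−δ,1]} ‖Z^n(s) − x⁰(s)‖ → 0 in probability as n → ∞. Then sup_{θ∈Θ} | (1/n) Σ_{k=1}^{n} f( Z^n((k−1)/n), ∫₀^δ Z^n((k−1)/n − g_n(u)) μ(du), θ ) − ∫₀^1 f( x⁰(s), ∫₀^δ x⁰(s−u) μ(du), θ ) ds | → 0 in probability as n → ∞. -/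

import Mathlib

open MeasureTheory Set Filter

set_option maxHeartbeats 1000000

open MeasureTheory Set Filter

/-- Elementary bounds for the grid map `g_n(u) = min(⌊nu⌋/n, ⌊nδ⌋/n)`. -/
theorem grid_bounds (n : ℕ) (hn : 1 ≤ n) (δ : ℝ) (u : ℝ) (hu0 : 0 ≤ u) (huδ : u ≤ δ) :
    0 ≤ min ((⌊(n:ℝ) * u⌋₊ : ℝ) / n) ((⌊(n:ℝ) * δ⌋₊ : ℝ) / n) ∧
    min ((⌊(n:ℝ) * u⌋₊ : ℝ) / n) ((⌊(n:ℝ) * δ⌋₊ : ℝ) / n) ≤ u ∧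
    u - min ((⌊(n:ℝ) * u⌋₊ : ℝ) / n) ((⌊(n:ℝ) * δ⌋₊ : ℝ) / n) ≤ 1 / n := by
  have hn0 : (0:ℝ) < n := by exact_mod_cast hn
  have h1 : (⌊(n:ℝ) * u⌋₊ : ℝ) ≤ (n:ℝ) * u := Nat.floor_le (by positivity)
  have h2 : (n:ℝ) * u < (⌊(n:ℝ) * u⌋₊ : ℝ) + 1 := Nat.lt_floor_add_one _
  have h3 : (n:ℝ) * δ < (⌊(n:ℝ) * δ⌋₊ : ℝ) + 1 := Nat.lt_floor_add_one _
  refine ⟨le_min (by positivity) (by positivity),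
    min_le_of_left_le (by rw [div_le_iff₀ hn0]; nlinarith), ?_⟩
  have hinv : (1/(n:ℝ)) * n = 1 := by field_simp
  have h4 : u - 1/n ≤ (⌊(n:ℝ) * u⌋₊ : ℝ) / n := by
    rw [le_div_iff₀ hn0]; nlinarith
  have h5 : u - 1/n ≤ (⌊(n:ℝ) * δ⌋₊ : ℝ) / n := by
    rw [le_div_iff₀ hn0]; nlinarith
  have := le_min h4 h5
  linarith

/-- Riemann-sum estimate: if on each cell `((i/n, (i+1)/n]` the constant `U i` is `ρ`-close
to `G`, then the Riemann sum is `ρ`-close to the integral. -/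
theorem sum_est (n : ℕ) (hn : 1 ≤ n) (U : ℕ → ℝ) (G : ℝ → ℝ) (ρ : ℝ) (hρ : 0 ≤ ρ)
    (hGint : ∀ i : ℕ, i < n → IntervalIntegrable G MeasureTheory.volume
      ((i:ℝ)/n) (((i:ℝ)+1)/n))
    (key : ∀ i : ℕ, i < n → ∀ s, (i:ℝ)/n < s → s ≤ ((i:ℝ)+1)/n → |U i - G s| ≤ ρ) :
    |(1/(n:ℝ)) * ∑ i ∈ Finset.range n, U i - ∫ s in (0:ℝ)..1, G s| ≤ ρ := by
  have hn0 : (0:ℝ) < n := by exact_mod_cast hn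
  have ha : ∀ i : ℕ, i < n → IntervalIntegrable G MeasureTheory.volume
      ((fun j : ℕ => (j:ℝ)/n) i) ((fun j : ℕ => (j:ℝ)/n) (i+1)) := by
    intro i hi
    have := hGint i hi
    simp only []
    push_cast
    exact this
  have hsplit := intervalIntegral.sum_integral_adjacent_intervals
    (μ := MeasureTheory.volume) (f := G) ha
  simp only [Nat.cast_zero, zero_div] at hsplit
  rw [div_self hn0.ne'] at hsplit
  rw [← hsplit, Finset.mul_sum, ← Finset.sum_sub_distrib]
  refine le_trans (Finset.abs_sum_le_sum_abs _ _) ?_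
  have hterm : ∀ i ∈ Finset.range n,
      |1/(n:ℝ) * U i - ∫ s in ((fun j : ℕ => (j:ℝ)/n) i)..((fun j : ℕ => (j:ℝ)/n) (i+1)), G s|
        ≤ ρ * (1/n) := by
    intro i hi
    rw [Finset.mem_range] at hi
    simp only []
    have hle : (i:ℝ)/n ≤ ((i+1:ℕ):ℝ)/n := by
      gcongr
      omega
    have hdiff : ((i+1:ℕ):ℝ)/n - (i:ℝ)/n = 1/n := by push_cast; field_simp; ring
    have heq : 1/(n:ℝ) * U i - ∫ s in ((i:ℝ)/n)..(((i+1:ℕ):ℝ)/n), G s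
        = ∫ s in ((i:ℝ)/n)..(((i+1:ℕ):ℝ)/n), (U i - G s) := by
      rw [intervalIntegral.integral_sub intervalIntegrable_const (by push_cast; exact hGint i hi),
        intervalIntegral.integral_const, smul_eq_mul, hdiff]
    rw [heq]
    have hpt : ∀ s ∈ Set.uIoc ((i:ℝ)/n) (((i+1:ℕ):ℝ)/n), ‖U i - G s‖ ≤ ρ := by
      intro s hs
      rw [Set.uIoc_of_le hle] at hs
      rw [Real.norm_eq_abs]
      refine key i hi s hs.1 ?_
      have h2 := hs.2
      push_cast at h2
      exact h2
    calc |∫ s in ((i:ℝ)/n)..(((i+1:ℕ):ℝ)/n), (U i - G s)|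
        ≤ ρ * |((i+1:ℕ):ℝ)/n - (i:ℝ)/n| := by
          rw [← Real.norm_eq_abs]
          exact intervalIntegral.norm_integral_le_of_norm_le_const hpt
      _ = ρ * (1/n) := by rw [hdiff, abs_of_pos (by positivity)]
  refine le_trans (Finset.sum_le_sum hterm) ?_
  rw [Finset.sum_const, Finset.card_range, nsmul_eq_mul]
  have : (n:ℝ) * (ρ * (1/n)) = ρ := by field_simp
  linarith

theorem det_lemma
    (d : ℕ) (δ : ℝ) (hδ : 0 < δ)
    (μ : Measure ℝ) [IsFiniteMeasure μ]
    (x0 : ℝ → EuclideanSpace ℝ (Fin d)) (hx0 : ContinuousOn x0 (Icc (-δ) 1))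
    (Θ : Type*) [MetricSpace Θ] [CompactSpace Θ]
    (f : EuclideanSpace ℝ (Fin d) → EuclideanSpace ℝ (Fin d) → Θ → ℝ)
    (hf : Continuous fun q : EuclideanSpace ℝ (Fin d) × EuclideanSpace ℝ (Fin d) × Θ =>
      f q.1 q.2.1 q.2.2)
    (ρ : ℝ) (hρ : 0 < ρ) :
    ∃ η > 0, ∃ N : ℕ, 1 ≤ N ∧ ∀ n, N ≤ n → ∀ z : ℝ → EuclideanSpace ℝ (Fin d),
      Measurable z → (∀ s ∈ Icc (-δ) (1:ℝ), ‖z s - x0 s‖ ≤ η) → ∀ θ : Θ,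
      |(1 / (n:ℝ)) * ∑ k ∈ Finset.Icc 1 n,
          f (z (((k:ℝ) - 1) / n))
            (∫ u in Icc (0:ℝ) δ,
              z (((k:ℝ) - 1) / n
                - min ((⌊(n:ℝ) * u⌋₊ : ℝ) / n) ((⌊(n:ℝ) * δ⌋₊ : ℝ) / n)) ∂μ) θ
        - ∫ s in (0:ℝ)..1, f (x0 s) (∫ u in Icc (0:ℝ) δ, x0 (s - u) ∂μ) θ| ≤ ρ := by
  obtain ⟨M0, hM0⟩ := isCompact_Icc.exists_bound_of_continuousOn hx0
  set M : ℝ := max M0 0 with hMdef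
  have hM : ∀ s ∈ Icc (-δ) (1:ℝ), ‖x0 s‖ ≤ M := fun s hs => (hM0 s hs).trans (le_max_left _ _)
  have hMnn : (0:ℝ) ≤ M := le_max_right _ _
  set C : ℝ := (μ (Icc (0:ℝ) δ)).toReal with hCdef
  have hCnn : 0 ≤ C := ENNReal.toReal_nonneg
  have hδ1 : -δ ≤ (1:ℝ) := by linarith
  have hsub01 : Icc (0:ℝ) 1 ⊆ Icc (-δ) 1 := Icc_subset_Icc (by linarith) le_rfl
  have hmem1 : ∀ s ∈ Icc (0:ℝ) 1, ∀ u ∈ Icc (0:ℝ) δ, s - u ∈ Icc (-δ) (1:ℝ) := by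
    rintro s ⟨hs0, hs1⟩ u ⟨hu0, huδ⟩
    exact ⟨by linarith, by linarith⟩
  have hxuc := isCompact_Icc.uniformContinuousOn_of_continuous hx0
  rw [Metric.uniformContinuousOn_iff] at hxuc
  have hμC : ((μ.restrict (Icc (0:ℝ) δ)) univ).toReal = C := by
    rw [Measure.restrict_apply_univ]
  -- integrability of the limit delay integrand
  have hIxint : ∀ s ∈ Icc (0:ℝ) 1, IntegrableOn (fun u => x0 (s - u)) (Icc (0:ℝ) δ) μ := by
    intro s hs
    have hcont : ContinuousOn (fun u => x0 (s - u)) (Icc (0:ℝ) δ) :=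
      hx0.comp ((continuous_const.sub continuous_id).continuousOn)
        (fun u hu => hmem1 s hs u hu)
    refine ⟨hcont.aestronglyMeasurable measurableSet_Icc,
      HasFiniteIntegral.of_bounded (C := M) ?_⟩
    rw [ae_restrict_iff' measurableSet_Icc]
    exact Eventually.of_forall fun u hu => hM _ (hmem1 s hs u hu)
  have hIxnorm : ∀ s ∈ Icc (0:ℝ) 1, ‖∫ u in Icc (0:ℝ) δ, x0 (s - u) ∂μ‖ ≤ M * C := by
    intro s hs
    calc ‖∫ u in Icc (0:ℝ) δ, x0 (s - u) ∂μ‖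
        ≤ M * ((μ.restrict (Icc (0:ℝ) δ)) univ).toReal :=
          norm_integral_le_of_norm_le_const ((ae_restrict_iff' measurableSet_Icc).2
            (Eventually.of_forall fun u hu => hM _ (hmem1 s hs u hu)))
      _ = M * C := by rw [hμC]
  -- continuity of the limit delay term
  have hIxc : ContinuousOn (fun s => ∫ u in Icc (0:ℝ) δ, x0 (s - u) ∂μ) (Icc (0:ℝ) 1) := by
    rw [Metric.continuousOn_iff]
    intro s hs ε hε
    obtain ⟨r, hr, hrx⟩ := hxuc (ε / (2 * (C + 1))) (by positivity)
    refine ⟨r, hr, fun s' hs' hss' => ?_⟩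
    have hsub : (∫ u in Icc (0:ℝ) δ, x0 (s' - u) ∂μ) - ∫ u in Icc (0:ℝ) δ, x0 (s - u) ∂μ
        = ∫ u in Icc (0:ℝ) δ, (x0 (s' - u) - x0 (s - u)) ∂μ :=
      (integral_sub (hIxint s' hs') (hIxint s hs)).symm
    rw [dist_eq_norm, hsub]
    have hb : ‖∫ u in Icc (0:ℝ) δ, (x0 (s' - u) - x0 (s - u)) ∂μ‖
        ≤ (ε / (2 * (C + 1))) * C := by
      calc ‖∫ u in Icc (0:ℝ) δ, (x0 (s' - u) - x0 (s - u)) ∂μ‖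
          ≤ (ε / (2 * (C + 1))) * ((μ.restrict (Icc (0:ℝ) δ)) univ).toReal := by
            refine norm_integral_le_of_norm_le_const ?_
            rw [ae_restrict_iff' measurableSet_Icc]
            refine Eventually.of_forall fun u hu => ?_
            have h1 := hmem1 s' hs' u hu
            have h2 := hmem1 s hs u hu
            have hd : dist (s' - u) (s - u) < r := by
              rw [Real.dist_eq, sub_sub_sub_cancel_right, ← Real.dist_eq]
              exact hss'
            have := hrx (s' - u) h1 (s - u) h2 hd
            rw [← dist_eq_norm]
            exact this.le
        _ = (ε / (2 * (C + 1))) * C := by rw [hμC]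
    have harith : (ε / (2 * (C + 1))) * C < ε := by
      rw [div_mul_eq_mul_div, div_lt_iff₀ (by positivity)]
      nlinarith
    exact lt_of_le_of_lt hb harith
  -- uniform continuity of f on a big compact set
  have hS : IsCompact ((Metric.closedBall (0 : EuclideanSpace ℝ (Fin d)) (M+1)) ×ˢ
      ((Metric.closedBall (0 : EuclideanSpace ℝ (Fin d)) (C*(M+1))) ×ˢ (univ : Set Θ))) :=
    (isCompact_closedBall _ _).prod ((isCompact_closedBall _ _).prod isCompact_univ)
  have hfu := hS.uniformContinuousOn_of_continuous hf.continuousOn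
  rw [Metric.uniformContinuousOn_iff] at hfu
  obtain ⟨rf, hrf, Hf⟩ := hfu ρ hρ
  obtain ⟨rx, hrx0, Hx⟩ := hxuc (rf / (2 * (C + 1))) (by positivity)
  set η : ℝ := min 1 (rf / (4 * (C + 1))) with hηdef
  have hη : 0 < η := lt_min one_pos (by positivity)
  have hη1 : η ≤ 1 := min_le_left _ _
  have hηrf : η ≤ rf / (4 * (C + 1)) := min_le_right _ _
  obtain ⟨N₀, hN₀⟩ := exists_nat_gt (2 / rx)
  refine ⟨η, hη, N₀ + 1, Nat.le_add_left 1 N₀, ?_⟩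
  intro n hn z hzm hz θ
  have hn1 : 1 ≤ n := le_trans (Nat.le_add_left 1 N₀) hn
  have hn0 : (0:ℝ) < n := by exact_mod_cast hn1
  have h2n : 2 / (n:ℝ) < rx := by
    have hN : (N₀:ℝ) < n := by exact_mod_cast lt_of_lt_of_le (Nat.lt_succ_self N₀) hn
    have h2 : 2 < (n:ℝ) * rx := by
      have := lt_trans hN₀ hN
      rw [div_lt_iff₀ hrx0] at this
      nlinarith
    rw [div_lt_iff₀ hn0]
    nlinarith
  have h1n2n : 1 / (n:ℝ) ≤ 2 / n := by
    have : 0 < 1 / (n:ℝ) := by positivity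
    have he : 1/(n:ℝ) + 1/n = 2/n := by ring
    linarith
  -- bound on z
  have hzb : ∀ a ∈ Icc (-δ) (1:ℝ), ‖z a‖ ≤ M + 1 := by
    intro a ha
    have h1 := hz a ha
    have h2 := hM a ha
    calc ‖z a‖ = ‖(z a - x0 a) + x0 a‖ := by rw [sub_add_cancel]
      _ ≤ ‖z a - x0 a‖ + ‖x0 a‖ := norm_add_le _ _
      _ ≤ M + 1 := by linarith
  -- measurability of the grid map
  have hgm : Measurable (fun u : ℝ =>
      min ((⌊(n:ℝ) * u⌋₊ : ℝ) / n) ((⌊(n:ℝ) * δ⌋₊ : ℝ) / n)) :=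
    ((measurable_from_top.comp (Nat.measurable_floor.comp
      (measurable_id.const_mul _))).div_const _).min measurable_const
  have hargmem : ∀ a ∈ Icc (0:ℝ) 1, ∀ u ∈ Icc (0:ℝ) δ,
      a - min ((⌊(n:ℝ) * u⌋₊ : ℝ) / n) ((⌊(n:ℝ) * δ⌋₊ : ℝ) / n) ∈ Icc (-δ) (1:ℝ) := by
    intro a ha u hu
    obtain ⟨hg0, hgu, -⟩ := grid_bounds n hn1 δ u hu.1 hu.2
    rcases ha with ⟨h1, h2⟩
    rcases hu with ⟨h3, h4⟩
    exact ⟨by linarith, by linarith⟩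
  have hIzint : ∀ a ∈ Icc (0:ℝ) 1, IntegrableOn
      (fun u => z (a - min ((⌊(n:ℝ) * u⌋₊ : ℝ) / n) ((⌊(n:ℝ) * δ⌋₊ : ℝ) / n)))
      (Icc (0:ℝ) δ) μ := by
    intro a ha
    refine ⟨((hzm.comp (measurable_const.sub hgm)).aestronglyMeasurable),
      HasFiniteIntegral.of_bounded (C := M + 1) ?_⟩
    rw [ae_restrict_iff' measurableSet_Icc]
    exact Eventually.of_forall fun u hu => hzb _ (hargmem a ha u hu)
  have hIznorm : ∀ a ∈ Icc (0:ℝ) 1,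
      ‖∫ u in Icc (0:ℝ) δ, z (a - min ((⌊(n:ℝ) * u⌋₊ : ℝ) / n) ((⌊(n:ℝ) * δ⌋₊ : ℝ) / n)) ∂μ‖
        ≤ C * (M + 1) := by
    intro a ha
    calc ‖∫ u in Icc (0:ℝ) δ, z (a - min ((⌊(n:ℝ) * u⌋₊ : ℝ) / n) ((⌊(n:ℝ) * δ⌋₊ : ℝ) / n)) ∂μ‖
        ≤ (M + 1) * ((μ.restrict (Icc (0:ℝ) δ)) univ).toReal :=
          norm_integral_le_of_norm_le_const ((ae_restrict_iff' measurableSet_Icc).2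
            (Eventually.of_forall fun u hu => hzb _ (hargmem a ha u hu)))
      _ = C * (M + 1) := by rw [hμC, mul_comm]
  -- fraction bounds
  have hfrac4 : rf / (4 * (C + 1)) ≤ rf / 4 :=
    div_le_div_of_nonneg_left hrf.le (by norm_num) (by linarith)
  have hfrac2 : rf / (2 * (C + 1)) ≤ rf / 2 :=
    div_le_div_of_nonneg_left hrf.le (by norm_num) (by linarith)
  have hfrac4C : rf / (4 * (C + 1)) * C ≤ rf / 4 := by
    rw [div_mul_eq_mul_div, div_le_div_iff₀ (by positivity) (by norm_num)]
    nlinarith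
  have hfrac2C : rf / (2 * (C + 1)) * C ≤ rf / 2 := by
    rw [div_mul_eq_mul_div, div_le_div_iff₀ (by positivity) (by norm_num)]
    nlinarith
  -- the key pointwise estimate
  have key : ∀ i : ℕ, i < n → ∀ s, (i:ℝ)/n < s → s ≤ ((i:ℝ)+1)/n →
      |f (z ((i:ℝ)/n)) (∫ u in Icc (0:ℝ) δ,
          z ((i:ℝ)/n - min ((⌊(n:ℝ) * u⌋₊ : ℝ) / n) ((⌊(n:ℝ) * δ⌋₊ : ℝ) / n)) ∂μ) θ
        - f (x0 s) (∫ u in Icc (0:ℝ) δ, x0 (s - u) ∂μ) θ| ≤ ρ := by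
    intro i hi s hs1 hs2
    have hin : (i:ℝ) ≤ n := by exact_mod_cast hi.le
    have hin1 : (i:ℝ) + 1 ≤ n := by exact_mod_cast hi
    have hti : (i:ℝ)/n ∈ Icc (0:ℝ) 1 := ⟨by positivity, by rw [div_le_one hn0]; exact hin⟩
    have hsI : s ∈ Icc (0:ℝ) 1 :=
      ⟨le_trans hti.1 hs1.le, hs2.trans (by rw [div_le_one hn0]; exact hin1)⟩
    have hts : |s - (i:ℝ)/n| ≤ 1/n := by
      rw [abs_le]
      constructor
      · have : (0:ℝ) ≤ 1/n := by positivity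
        linarith [hs1.le]
      · have hdd : ((i:ℝ)+1)/n - (i:ℝ)/n = 1/n := by field_simp; ring
        linarith
    -- first coordinates close
    have hd1 : dist (z ((i:ℝ)/n)) (x0 s) < rf := by
      have e1 : ‖z ((i:ℝ)/n) - x0 ((i:ℝ)/n)‖ ≤ η := hz _ (hsub01 hti)
      have e2 : dist (x0 ((i:ℝ)/n)) (x0 s) < rf/(2*(C+1)) := by
        apply Hx _ (hsub01 hti) _ (hsub01 hsI)
        rw [Real.dist_eq, abs_sub_comm]
        exact lt_of_le_of_lt (le_trans hts h1n2n) h2n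
      calc dist (z ((i:ℝ)/n)) (x0 s)
          ≤ dist (z ((i:ℝ)/n)) (x0 ((i:ℝ)/n)) + dist (x0 ((i:ℝ)/n)) (x0 s) :=
            dist_triangle _ _ _
        _ < rf := by
            rw [dist_eq_norm]
            have : η ≤ rf/4 := le_trans hηrf hfrac4
            linarith
    -- second coordinates close
    have hd2 : dist (∫ u in Icc (0:ℝ) δ,
        z ((i:ℝ)/n - min ((⌊(n:ℝ) * u⌋₊ : ℝ) / n) ((⌊(n:ℝ) * δ⌋₊ : ℝ) / n)) ∂μ)
        (∫ u in Icc (0:ℝ) δ, x0 (s - u) ∂μ) < rf := by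
      rw [dist_eq_norm]
      have hsub : (∫ u in Icc (0:ℝ) δ,
            z ((i:ℝ)/n - min ((⌊(n:ℝ) * u⌋₊ : ℝ) / n) ((⌊(n:ℝ) * δ⌋₊ : ℝ) / n)) ∂μ)
          - ∫ u in Icc (0:ℝ) δ, x0 (s - u) ∂μ
          = ∫ u in Icc (0:ℝ) δ,
              (z ((i:ℝ)/n - min ((⌊(n:ℝ) * u⌋₊ : ℝ) / n) ((⌊(n:ℝ) * δ⌋₊ : ℝ) / n))
                - x0 (s - u)) ∂μ :=
        (integral_sub (hIzint _ hti) (hIxint s hsI)).symm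
      rw [hsub]
      have hpt : ∀ u ∈ Icc (0:ℝ) δ,
          ‖z ((i:ℝ)/n - min ((⌊(n:ℝ) * u⌋₊ : ℝ) / n) ((⌊(n:ℝ) * δ⌋₊ : ℝ) / n)) - x0 (s - u)‖
            ≤ η + rf/(2*(C+1)) := by
        intro u hu
        obtain ⟨hg0, hgu, hg1n⟩ := grid_bounds n hn1 δ u hu.1 hu.2
        have hmemz := hargmem _ hti u hu
        have hmemx := hmem1 s hsI u hu
        set gu : ℝ := min ((⌊(n:ℝ) * u⌋₊ : ℝ) / n) ((⌊(n:ℝ) * δ⌋₊ : ℝ) / n) with hgu_def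
        have e1 : ‖z ((i:ℝ)/n - gu) - x0 ((i:ℝ)/n - gu)‖ ≤ η := hz _ hmemz
        have e2 : dist (x0 ((i:ℝ)/n - gu)) (x0 (s - u)) < rf/(2*(C+1)) := by
          apply Hx _ hmemz _ hmemx
          rw [Real.dist_eq]
          have hre : (i:ℝ)/n - gu - (s - u) = (u - gu) - (s - (i:ℝ)/n) := by ring
          rw [hre]
          calc |(u - gu) - (s - (i:ℝ)/n)| ≤ |u - gu| + |s - (i:ℝ)/n| := abs_sub _ _
            _ ≤ 1/n + 1/n := by
                refine add_le_add ?_ hts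
                rw [abs_of_nonneg (by linarith)]
                exact hg1n
            _ < rx := by
                have : 1/(n:ℝ) + 1/n = 2/n := by ring
                linarith
        calc ‖z ((i:ℝ)/n - gu) - x0 (s - u)‖
            ≤ ‖z ((i:ℝ)/n - gu) - x0 ((i:ℝ)/n - gu)‖ + ‖x0 ((i:ℝ)/n - gu) - x0 (s - u)‖ := by
              have := norm_add_le (z ((i:ℝ)/n - gu) - x0 ((i:ℝ)/n - gu))
                (x0 ((i:ℝ)/n - gu) - x0 (s - u))
              calc ‖z ((i:ℝ)/n - gu) - x0 (s - u)‖
                  = ‖(z ((i:ℝ)/n - gu) - x0 ((i:ℝ)/n - gu)) + (x0 ((i:ℝ)/n - gu) - x0 (s - u))‖ := by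
                    congr 1
                    abel
                _ ≤ _ := this
          _ ≤ η + rf/(2*(C+1)) := by
              rw [dist_eq_norm] at e2
              linarith
      have hIb : ‖∫ u in Icc (0:ℝ) δ,
          (z ((i:ℝ)/n - min ((⌊(n:ℝ) * u⌋₊ : ℝ) / n) ((⌊(n:ℝ) * δ⌋₊ : ℝ) / n)) - x0 (s - u)) ∂μ‖
            ≤ (η + rf/(2*(C+1))) * C := by
        calc ‖∫ u in Icc (0:ℝ) δ,
            (z ((i:ℝ)/n - min ((⌊(n:ℝ) * u⌋₊ : ℝ) / n) ((⌊(n:ℝ) * δ⌋₊ : ℝ) / n)) - x0 (s - u)) ∂μ‖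
            ≤ (η + rf/(2*(C+1))) * ((μ.restrict (Icc (0:ℝ) δ)) univ).toReal :=
              norm_integral_le_of_norm_le_const ((ae_restrict_iff' measurableSet_Icc).2
                (Eventually.of_forall hpt))
          _ = (η + rf/(2*(C+1))) * C := by rw [hμC]
      have harith : (η + rf/(2*(C+1))) * C < rf := by
        have h1 : η * C ≤ rf/(4*(C+1)) * C := mul_le_mul_of_nonneg_right hηrf hCnn
        have hexp : (η + rf/(2*(C+1))) * C = η*C + rf/(2*(C+1))*C := by ring
        rw [hexp]
        linarith
      linarith
    -- apply uniform continuity of f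
    have hp : ((z ((i:ℝ)/n), ((∫ u in Icc (0:ℝ) δ,
        z ((i:ℝ)/n - min ((⌊(n:ℝ) * u⌋₊ : ℝ) / n) ((⌊(n:ℝ) * δ⌋₊ : ℝ) / n)) ∂μ), θ))
          : EuclideanSpace ℝ (Fin d) × EuclideanSpace ℝ (Fin d) × Θ) ∈
        (Metric.closedBall (0 : EuclideanSpace ℝ (Fin d)) (M+1)) ×ˢ
          ((Metric.closedBall (0 : EuclideanSpace ℝ (Fin d)) (C*(M+1))) ×ˢ (univ : Set Θ)) := by
      refine Set.mem_prod.2 ⟨mem_closedBall_zero_iff.2 (hzb _ (hsub01 hti)),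
        Set.mem_prod.2 ⟨mem_closedBall_zero_iff.2 (hIznorm _ hti), mem_univ θ⟩⟩
    have hq : ((x0 s, ((∫ u in Icc (0:ℝ) δ, x0 (s - u) ∂μ), θ))
          : EuclideanSpace ℝ (Fin d) × EuclideanSpace ℝ (Fin d) × Θ) ∈
        (Metric.closedBall (0 : EuclideanSpace ℝ (Fin d)) (M+1)) ×ˢ
          ((Metric.closedBall (0 : EuclideanSpace ℝ (Fin d)) (C*(M+1))) ×ˢ (univ : Set Θ)) := by
      refine Set.mem_prod.2 ⟨mem_closedBall_zero_iff.2 ((hM s (hsub01 hsI)).trans (by linarith)),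
        Set.mem_prod.2 ⟨mem_closedBall_zero_iff.2 ((hIxnorm s hsI).trans (by nlinarith)),
        mem_univ θ⟩⟩
    have hdpq : dist ((z ((i:ℝ)/n), ((∫ u in Icc (0:ℝ) δ,
        z ((i:ℝ)/n - min ((⌊(n:ℝ) * u⌋₊ : ℝ) / n) ((⌊(n:ℝ) * δ⌋₊ : ℝ) / n)) ∂μ), θ))
          : EuclideanSpace ℝ (Fin d) × EuclideanSpace ℝ (Fin d) × Θ)
        ((x0 s, ((∫ u in Icc (0:ℝ) δ, x0 (s - u) ∂μ), θ))) < rf := by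
      rw [Prod.dist_eq, Prod.dist_eq]
      refine max_lt hd1 (max_lt hd2 ?_)
      rw [dist_self]
      exact hrf
    have := Hf _ hp _ hq hdpq
    simp only [Real.dist_eq] at this
    exact this.le
  -- reshape the sum and conclude via sum_est
  rw [show Finset.Icc 1 n = Finset.Ico 1 (n+1) from (Finset.Ico_add_one_right_eq_Icc 1 n).symm,
    Finset.sum_Ico_eq_sum_range]
  simp only [Nat.add_sub_cancel]
  have hre : ∀ i ∈ Finset.range n,
      f (z ((((1 + i : ℕ):ℝ) - 1) / n))
        (∫ u in Icc (0:ℝ) δ, z ((((1 + i : ℕ):ℝ) - 1) / n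
          - min ((⌊(n:ℝ) * u⌋₊ : ℝ) / n) ((⌊(n:ℝ) * δ⌋₊ : ℝ) / n)) ∂μ) θ
      = f (z ((i:ℝ)/n))
        (∫ u in Icc (0:ℝ) δ, z ((i:ℝ)/n
          - min ((⌊(n:ℝ) * u⌋₊ : ℝ) / n) ((⌊(n:ℝ) * δ⌋₊ : ℝ) / n)) ∂μ) θ := by
    intro i _
    have hc : (((1 + i : ℕ):ℝ) - 1) / n = (i:ℝ)/n := by push_cast; ring
    rw [hc]
  rw [Finset.sum_congr rfl hre]
  -- continuity of the limit integrand
  have hGc : ContinuousOn (fun s => f (x0 s) (∫ u in Icc (0:ℝ) δ, x0 (s - u) ∂μ) θ)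
      (Icc (0:ℝ) 1) := by
    have h1 : ContinuousOn (fun s => ((x0 s, ((∫ u in Icc (0:ℝ) δ, x0 (s - u) ∂μ), θ))
        : EuclideanSpace ℝ (Fin d) × EuclideanSpace ℝ (Fin d) × Θ)) (Icc (0:ℝ) 1) :=
      (hx0.mono hsub01).prodMk (hIxc.prodMk continuousOn_const)
    exact hf.comp_continuousOn h1
  have hGint : ∀ i : ℕ, i < n → IntervalIntegrable
      (fun s => f (x0 s) (∫ u in Icc (0:ℝ) δ, x0 (s - u) ∂μ) θ) MeasureTheory.volume
      ((i:ℝ)/n) (((i:ℝ)+1)/n) := by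
    intro i hi
    have hin1 : (i:ℝ) + 1 ≤ n := by exact_mod_cast hi
    have hle : (i:ℝ)/n ≤ ((i:ℝ)+1)/n := by gcongr; linarith
    apply ContinuousOn.intervalIntegrable
    apply hGc.mono
    rw [Set.uIcc_of_le hle]
    intro x hx
    exact ⟨le_trans (by positivity) hx.1, le_trans hx.2 (by rw [div_le_one hn0]; exact hin1)⟩
  exact sum_est n hn1 _ _ ρ hρ.le hGint key

/-- The paper's Lemma 6(i): if the sample paths `Z^n` converge to the deterministic limit
path `x⁰` uniformly on `[-δ,1]` in probability, then the discretized Riemann sums of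
`f(Z^n, H_n(Z^n), θ)` converge, uniformly in `θ` over the compact parameter space and in
probability, to `∫₀¹ f(x⁰(s), H(x⁰(s-·)), θ) ds`. -/
theorem riemann_sum_uniform_convergence_in_probability
    (d : ℕ) (hd : 1 ≤ d) (δ : ℝ) (hδ : 0 < δ)
    (μ : Measure ℝ) [IsFiniteMeasure μ]
    (x0 : ℝ → EuclideanSpace ℝ (Fin d)) (hx0 : ContinuousOn x0 (Icc (-δ) 1))
    (Θ : Type*) [MetricSpace Θ] [CompactSpace Θ]
    (f : EuclideanSpace ℝ (Fin d) → EuclideanSpace ℝ (Fin d) → Θ → ℝ)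
    (hf : Continuous fun q : EuclideanSpace ℝ (Fin d) × EuclideanSpace ℝ (Fin d) × Θ =>
      f q.1 q.2.1 q.2.2)
    (Ω : Type*) [MeasurableSpace Ω] (P : Measure Ω) [IsProbabilityMeasure P]
    (Z : ℕ → Ω → ℝ → EuclideanSpace ℝ (Fin d))
    (hZm : ∀ n, Measurable (fun q : Ω × ℝ => Z n q.1 q.2))
    (hZc : ∀ n ω, ContinuousOn (Z n ω) (Icc (-δ) 1))
    (hconv : ∀ ρ : ℝ, 0 < ρ →
      Tendsto (fun n : ℕ =>
          P {ω | ρ ≤ sSup ((fun s => ‖Z n ω s - x0 s‖) '' Icc (-δ) (1:ℝ))})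
        atTop (nhds 0)) :
    ∀ ρ : ℝ, 0 < ρ →
      Tendsto (fun n : ℕ =>
          P {ω | ρ ≤ ⨆ θ : Θ,
            |(1 / (n:ℝ)) * ∑ k ∈ Finset.Icc 1 n,
                f (Z n ω (((k:ℝ) - 1) / n))
                  (∫ u in Icc (0:ℝ) δ,
                    Z n ω (((k:ℝ) - 1) / n
                      - min ((⌊(n:ℝ) * u⌋₊ : ℝ) / n) ((⌊(n:ℝ) * δ⌋₊ : ℝ) / n)) ∂μ) θ
              - ∫ s in (0:ℝ)..1, f (x0 s) (∫ u in Icc (0:ℝ) δ, x0 (s - u) ∂μ) θ|})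
        atTop (nhds 0) := by
  intro ρ hρ
  obtain ⟨η, hη, N, hN1, hdet⟩ := det_lemma d δ hδ μ x0 hx0 Θ f hf (ρ/2) (by linarith)
  have hmono : ∀ᶠ n : ℕ in atTop,
      P {ω | ρ ≤ ⨆ θ : Θ,
        |(1 / (n:ℝ)) * ∑ k ∈ Finset.Icc 1 n,
            f (Z n ω (((k:ℝ) - 1) / n))
              (∫ u in Icc (0:ℝ) δ,
                Z n ω (((k:ℝ) - 1) / n
                  - min ((⌊(n:ℝ) * u⌋₊ : ℝ) / n) ((⌊(n:ℝ) * δ⌋₊ : ℝ) / n)) ∂μ) θ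
          - ∫ s in (0:ℝ)..1, f (x0 s) (∫ u in Icc (0:ℝ) δ, x0 (s - u) ∂μ) θ|}
      ≤ P {ω | η ≤ sSup ((fun s => ‖Z n ω s - x0 s‖) '' Icc (-δ) (1:ℝ))} := by
    rw [eventually_atTop]
    refine ⟨N, fun n hn => measure_mono ?_⟩
    intro ω hω
    simp only [Set.mem_setOf_eq] at hω ⊢
    by_contra hcon
    push_neg at hcon
    have hbdd : BddAbove ((fun s => ‖Z n ω s - x0 s‖) '' Icc (-δ) (1:ℝ)) :=
      (isCompact_Icc.image_of_continuousOn (((hZc n ω).sub hx0).norm)).bddAbove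
    have hzb : ∀ s ∈ Icc (-δ) (1:ℝ), ‖Z n ω s - x0 s‖ ≤ η := fun s hs =>
      le_of_lt (lt_of_le_of_lt (le_csSup hbdd (mem_image_of_mem _ hs)) hcon)
    have hθ := hdet n hn (Z n ω) ((hZm n).comp measurable_prodMk_left) hzb
    have hsup : (⨆ θ : Θ,
        |(1 / (n:ℝ)) * ∑ k ∈ Finset.Icc 1 n,
            f (Z n ω (((k:ℝ) - 1) / n))
              (∫ u in Icc (0:ℝ) δ,
                Z n ω (((k:ℝ) - 1) / n
                  - min ((⌊(n:ℝ) * u⌋₊ : ℝ) / n) ((⌊(n:ℝ) * δ⌋₊ : ℝ) / n)) ∂μ) θ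
          - ∫ s in (0:ℝ)..1, f (x0 s) (∫ u in Icc (0:ℝ) δ, x0 (s - u) ∂μ) θ|) ≤ ρ/2 :=
      Real.iSup_le hθ (by linarith)
    linarith
  exact tendsto_of_tendsto_of_tendsto_of_le_of_le' tendsto_const_nhds (hconv η hη)
    (Eventually.of_forall fun n => zero_le) hmono
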